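/- Let λ > 0, β > 0, and let g be a discrete-time Wiener process with parameter λ on an index set contained in [0, 1] and containing the points e^{-βt} for t in some set S ⊆ [0, ∞) (together with 0). Define f(t) = g(e^{-βt}) for t ∈ S. Then f is a zero-mean Gaussian process whose covariance function is Cov(f(t), f(s)) = λ·min{e^{-βt}, e^{-βs}} for all t, s ∈ S. -/

import Mathlib

open MeasureTheory ProbabilityTheory Real Filter
open scoped NNReal ENNReal

set_option linter.unusedTactic false
set_option linter.unusedSectionVars false

section Stmt9Aux


lemma gaussianReal_eq_withDensity {μ : ℝ} {v : ℝ≥0} (hv : v ≠ 0) :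
    gaussianReal μ v
      = volume.withDensity (fun x => ((gaussianPDFReal μ v x).toNNReal : ℝ≥0∞)) := by
  rw [gaussianReal_of_var_ne_zero _ hv]
  rfl

lemma integral_gaussianReal_eq {μ : ℝ} {v : ℝ≥0} (hv : v ≠ 0) (φ : ℝ → ℝ) :
    ∫ x, φ x ∂(gaussianReal μ v) = ∫ x, gaussianPDFReal μ v x * φ x := by
  rw [gaussianReal_eq_withDensity hv,
    integral_withDensity_eq_integral_smul
      ((measurable_gaussianPDFReal μ v).real_toNNReal) φ]
  congr 1
  ext x
  rw [NNReal.smul_def, smul_eq_mul, Real.coe_toNNReal _ (gaussianPDFReal_nonneg μ v x)]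

lemma integrable_gaussianReal_iff {μ : ℝ} {v : ℝ≥0} (hv : v ≠ 0) (φ : ℝ → ℝ) :
    Integrable φ (gaussianReal μ v) ↔
      Integrable (fun x => φ x * gaussianPDFReal μ v x) volume := by
  rw [gaussianReal_eq_withDensity hv,
    integrable_withDensity_iff
      ((measurable_gaussianPDFReal μ v).real_toNNReal.coe_nnreal_ennreal)
      (ae_of_all _ fun x => ENNReal.coe_lt_top)]
  simp only [ENNReal.coe_toReal, Real.coe_toNNReal _ (gaussianPDFReal_nonneg μ v _)]

lemma gaussianPDFReal_zero_mean (v : ℝ≥0) (x : ℝ) :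
    gaussianPDFReal 0 v x = (√(2 * π * v))⁻¹ * rexp (-(2 * (v:ℝ))⁻¹ * x ^ 2) := by
  rw [gaussianPDFReal, sub_zero]
  ring_nf

lemma integral_id_gaussianReal (v : ℝ≥0) : ∫ x, x ∂(gaussianReal 0 v) = 0 := by
  by_cases hv : v = 0
  · simp [hv, gaussianReal_zero_var]
  · rw [integral_gaussianReal_eq hv]
    have hodd : ∀ x : ℝ, gaussianPDFReal 0 v (-x) * (-x) = -(gaussianPDFReal 0 v x * x) := by
      intro x
      rw [gaussianPDFReal, gaussianPDFReal]
      ring_nf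
    have h2 := MeasureTheory.integral_neg_eq_self (fun x => gaussianPDFReal 0 v x * x) volume
    simp only [hodd, integral_neg] at h2
    linarith

lemma vpos {v : ℝ≥0} (hv : v ≠ 0) : (0:ℝ) < (v:ℝ) :=
  lt_of_le_of_ne v.coe_nonneg (by exact_mod_cast (Ne.symm hv))

lemma integrable_dirac' {f : ℝ → ℝ} (hf : Measurable f) (a : ℝ) :
    Integrable f (Measure.dirac a) := by
  refine ⟨hf.aestronglyMeasurable, ?_⟩
  unfold HasFiniteIntegral
  rw [lintegral_dirac' a (by measurability)]
  exact ENNReal.coe_lt_top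

lemma integrable_id_gaussianReal (v : ℝ≥0) :
    Integrable (fun x => x) (gaussianReal 0 v) := by
  by_cases hv : v = 0
  · simp only [hv, gaussianReal_zero_var]
    exact integrable_dirac' measurable_id _
  · rw [integrable_gaussianReal_iff hv]
    have hpos : (0:ℝ) < (2 * (v:ℝ))⁻¹ := by have := vpos hv; positivity
    have h := (integrable_mul_exp_neg_mul_sq hpos).const_mul (√(2 * π * v))⁻¹
    have heq : (fun x => x * gaussianPDFReal 0 v x)
        = fun x => (√(2 * π * v))⁻¹ * (x * rexp (-(2 * (v:ℝ))⁻¹ * x ^ 2)) := by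
      ext x; rw [gaussianPDFReal_zero_mean]; ring
    rw [heq]; exact h

lemma integrable_sq_gaussianReal (v : ℝ≥0) :
    Integrable (fun x => x ^ 2) (gaussianReal 0 v) := by
  by_cases hv : v = 0
  · simp only [hv, gaussianReal_zero_var]
    exact _root_.integrable_dirac' (by measurability) _
  · rw [integrable_gaussianReal_iff hv]
    have hpos : (0:ℝ) < (2 * (v:ℝ))⁻¹ := by have := vpos hv; positivity
    have h := ((integrable_rpow_mul_exp_neg_mul_sq hpos
        (by norm_num : (-1:ℝ) < 2)).const_mul (√(2 * π * v))⁻¹)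
    have hrpow : ∀ x : ℝ, x ^ (2:ℝ) = x ^ (2:ℕ) := fun x => by
      rw [show ((2:ℝ)) = ((2:ℕ):ℝ) by norm_num, Real.rpow_natCast]
    have heq : (fun x => x ^ 2 * gaussianPDFReal 0 v x)
        = fun x => (√(2 * π * v))⁻¹ * (x ^ (2:ℝ) * rexp (-(2 * (v:ℝ))⁻¹ * x ^ 2)) := by
      ext x; rw [gaussianPDFReal_zero_mean, hrpow]; ring
    rw [heq]; exact h

lemma integral_sq_gaussianReal (v : ℝ≥0) :
    ∫ x, x ^ 2 ∂(gaussianReal 0 v) = (v : ℝ) := by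
  by_cases hv : v = 0
  · simp [hv, gaussianReal_zero_var]
  · have hvpos : (0:ℝ) < (v:ℝ) :=
      lt_of_le_of_ne v.coe_nonneg (by exact_mod_cast (Ne.symm hv))
    set b : ℝ := (2 * (v:ℝ))⁻¹ with hb
    have hbpos : (0:ℝ) < b := by positivity
    rw [integral_gaussianReal_eq hv]
    have h1 : (fun x : ℝ => gaussianPDFReal 0 v x * x ^ 2)
        = fun x => (√(2 * π * v))⁻¹ * ((fun y => y ^ 2 * rexp (-b * y ^ 2)) |x|) := by
      ext x
      simp only [sq_abs]
      rw [gaussianPDFReal_zero_mean]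
      ring
    rw [h1, integral_const_mul, integral_comp_abs
      (f := fun y => y ^ 2 * rexp (-b * y ^ 2))]
    have h2 : ∫ x in Set.Ioi (0:ℝ), x ^ 2 * rexp (-b * x ^ 2)
        = b ^ (-(3:ℝ)/2) * (1/2) * Real.Gamma (3/2) := by
      have := integral_rpow_mul_exp_neg_mul_rpow (p := 2) (q := 2)
        (by norm_num) (by norm_num) hbpos
      have hcast : ∀ x : ℝ, 0 < x → x ^ (2:ℝ) = x ^ (2:ℕ) := fun x hx => by
        rw [show ((2:ℝ)) = ((2:ℕ):ℝ) by norm_num, Real.rpow_natCast]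
      rw [setIntegral_congr_fun measurableSet_Ioi
        (fun x hx => by rw [← hcast x hx])]
      rw [this]
      norm_num
    rw [h2]
    have hg : Real.Gamma (3/2) = √π / 2 := by
      rw [show (3/2 : ℝ) = 1/2 + 1 by norm_num, Real.Gamma_add_one (by norm_num),
        Real.Gamma_one_half_eq]
      ring
    rw [hg]
    -- remaining algebra
    have hbrw : b ^ (-(3:ℝ)/2) = (2 * (v:ℝ)) ^ ((3:ℝ)/2) := by
      rw [hb, ← Real.rpow_neg_one, ← Real.rpow_mul (by positivity)]
      norm_num
    set s : ℝ := 2 * (v:ℝ) with hs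
    have hspos : (0:ℝ) < s := by positivity
    have h3 : s ^ ((3:ℝ)/2) = s * s ^ ((1:ℝ)/2) := by
      rw [show (3:ℝ)/2 = 1 + 1/2 by norm_num, Real.rpow_add hspos, Real.rpow_one]
    have h4 : √(2 * π * v) = s ^ ((1:ℝ)/2) * √π := by
      rw [show 2 * π * (v:ℝ) = s * π by rw [hs]; ring,
        Real.sqrt_mul (le_of_lt hspos), Real.sqrt_eq_rpow]
    have e1 : s ^ ((1:ℝ)/2) ≠ 0 := ne_of_gt (Real.rpow_pos_of_pos hspos _)
    have e2 : √π ≠ 0 := ne_of_gt (Real.sqrt_pos.mpr Real.pi_pos)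
    rw [hbrw, h3, h4]
    field_simp
    ring


-- pointwise pdf identity
lemma pdf_conv_pointwise {v₁ v₂ : ℝ≥0} (h₁ : v₁ ≠ 0) (h₂ : v₂ ≠ 0) (z x : ℝ) :
    gaussianPDFReal 0 v₁ x * gaussianPDFReal 0 v₂ (z - x)
      = gaussianPDFReal 0 (v₁ + v₂) z *
        gaussianPDFReal (z * v₁ / (v₁ + v₂)) (v₁ * v₂ / (v₁ + v₂)) x := by
  have ha : (0:ℝ) < v₁ := lt_of_le_of_ne v₁.coe_nonneg (by exact_mod_cast (Ne.symm h₁))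
  have hb : (0:ℝ) < v₂ := lt_of_le_of_ne v₂.coe_nonneg (by exact_mod_cast (Ne.symm h₂))
  rw [gaussianPDFReal, gaussianPDFReal, gaussianPDFReal, gaussianPDFReal]
  have hcoe1 : ((v₁ + v₂ : ℝ≥0) : ℝ) = (v₁:ℝ) + v₂ := by push_cast; ring
  have hcoe2 : ((v₁ * v₂ / (v₁ + v₂) : ℝ≥0) : ℝ) = (v₁:ℝ) * v₂ / ((v₁:ℝ) + v₂) := by
    push_cast; ring
  rw [hcoe1, hcoe2]
  have hv : (0:ℝ) < (v₁:ℝ) + v₂ := by positivity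
  -- constants
  have hconst : (√(2 * π * v₁))⁻¹ * (√(2 * π * v₂))⁻¹
      = (√(2 * π * ((v₁:ℝ) + v₂)))⁻¹ * (√(2 * π * ((v₁:ℝ) * v₂ / ((v₁:ℝ) + v₂))))⁻¹ := by
    rw [← mul_inv, ← mul_inv, ← Real.sqrt_mul (by positivity), ← Real.sqrt_mul (by positivity)]
    congr 1
    field_simp
  -- exponents
  have hexp : rexp (-(x - 0) ^ 2 / (2 * v₁)) * rexp (-(z - x - 0) ^ 2 / (2 * v₂))
      = rexp (-(z - 0) ^ 2 / (2 * ((v₁:ℝ) + v₂))) *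
        rexp (-(x - z * v₁ / ((v₁:ℝ) + v₂)) ^ 2 / (2 * ((v₁:ℝ) * v₂ / ((v₁:ℝ) + v₂)))) := by
    rw [← Real.exp_add, ← Real.exp_add]
    congr 1
    field_simp
    ring
  calc (√(2 * π * v₁))⁻¹ * rexp (-(x - 0) ^ 2 / (2 * v₁)) *
        ((√(2 * π * v₂))⁻¹ * rexp (-(z - x - 0) ^ 2 / (2 * v₂)))
      = ((√(2 * π * v₁))⁻¹ * (√(2 * π * v₂))⁻¹) *
        (rexp (-(x - 0) ^ 2 / (2 * v₁)) * rexp (-(z - x - 0) ^ 2 / (2 * v₂))) := by ring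
    _ = _ := by rw [hconst, hexp]; push_cast; ring

lemma lintegral_pdf_conv {v₁ v₂ : ℝ≥0} (h₁ : v₁ ≠ 0) (h₂ : v₂ ≠ 0) (z : ℝ) :
    ∫⁻ x, ENNReal.ofReal (gaussianPDFReal 0 v₁ x) *
        ENNReal.ofReal (gaussianPDFReal 0 v₂ (z - x))
      = ENNReal.ofReal (gaussianPDFReal 0 (v₁ + v₂) z) := by
  have ha : (0:ℝ) < v₁ := lt_of_le_of_ne v₁.coe_nonneg (by exact_mod_cast (Ne.symm h₁))
  have hb : (0:ℝ) < v₂ := lt_of_le_of_ne v₂.coe_nonneg (by exact_mod_cast (Ne.symm h₂))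
  have h12 : (v₁ * v₂ / (v₁ + v₂) : ℝ≥0) ≠ 0 := by
    have hpos : (0:ℝ) < ((v₁ * v₂ / (v₁ + v₂) : ℝ≥0) : ℝ) := by
      push_cast; positivity
    exact fun h => by simp [h] at hpos
  calc ∫⁻ x, ENNReal.ofReal (gaussianPDFReal 0 v₁ x) *
        ENNReal.ofReal (gaussianPDFReal 0 v₂ (z - x))
      = ∫⁻ x, ENNReal.ofReal (gaussianPDFReal 0 (v₁ + v₂) z) *
          ENNReal.ofReal (gaussianPDFReal (z * v₁ / (v₁ + v₂)) (v₁ * v₂ / (v₁ + v₂)) x) := by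
        congr 1
        ext x
        rw [← ENNReal.ofReal_mul (gaussianPDFReal_nonneg _ _ _),
          ← ENNReal.ofReal_mul (gaussianPDFReal_nonneg _ _ _),
          pdf_conv_pointwise h₁ h₂]
    _ = ENNReal.ofReal (gaussianPDFReal 0 (v₁ + v₂) z) := by
        rw [lintegral_const_mul _ ((measurable_gaussianPDFReal _ _).ennreal_ofReal),
          lintegral_gaussianPDFReal_eq_one _ h12, mul_one]

lemma gaussianReal_conv (v₁ v₂ : ℝ≥0) :
    ((gaussianReal 0 v₁).prod (gaussianReal 0 v₂)).map (fun p : ℝ × ℝ => p.1 + p.2)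
      = gaussianReal 0 (v₁ + v₂) := by
  by_cases h₁ : v₁ = 0
  · subst h₁
    rw [gaussianReal_zero_var, Measure.dirac_prod, zero_add,
      Measure.map_map measurable_add (measurable_prodMk_left)]
    have : ((fun p : ℝ × ℝ => p.1 + p.2) ∘ Prod.mk 0) = id := by ext x; simp
    rw [this, Measure.map_id]
  by_cases h₂ : v₂ = 0
  · subst h₂
    rw [gaussianReal_zero_var, Measure.prod_dirac, add_zero,
      Measure.map_map measurable_add (measurable_prodMk_right)]
    have : ((fun p : ℝ × ℝ => p.1 + p.2) ∘ fun x : ℝ => (x, (0:ℝ))) = id := by ext x; simp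
    rw [this, Measure.map_id]
  -- main case
  ext s hs
  rw [Measure.map_apply measurable_add hs,
    Measure.prod_apply (measurable_add hs)]
  have hp1 : gaussianReal 0 v₁ = volume.withDensity (gaussianPDF 0 v₁) :=
    gaussianReal_of_var_ne_zero _ h₁
  have hp2 : gaussianReal 0 v₂ = volume.withDensity (gaussianPDF 0 v₂) :=
    gaussianReal_of_var_ne_zero _ h₂
  have hpdf2meas : Measurable (gaussianPDF 0 v₂) :=
    (measurable_gaussianPDFReal _ _).ennreal_ofReal
  have hpdf1meas : Measurable (gaussianPDF 0 v₁) :=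
    (measurable_gaussianPDFReal _ _).ennreal_ofReal
  calc ∫⁻ x, (gaussianReal 0 v₂) (Prod.mk x ⁻¹' ((fun p : ℝ × ℝ => p.1 + p.2) ⁻¹' s))
        ∂(gaussianReal 0 v₁)
      = ∫⁻ x, (∫⁻ y, s.indicator (fun _ => (1:ℝ≥0∞)) (x + y) * gaussianPDF 0 v₂ y)
          ∂(gaussianReal 0 v₁) := by
        congr 1
        ext x
        have hB : MeasurableSet ((fun y : ℝ => x + y) ⁻¹' s) :=
          (measurable_id'.const_add x) hs
        have hset : Prod.mk x ⁻¹' ((fun p : ℝ × ℝ => p.1 + p.2) ⁻¹' s)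
            = (fun y : ℝ => x + y) ⁻¹' s := rfl
        rw [hset, hp2, withDensity_apply _ hB, ← lintegral_indicator hB]
        congr 1
        ext y
        by_cases hxy : x + y ∈ s <;>
          simp [Set.indicator, hxy, Set.mem_preimage]
    _ = ∫⁻ x, gaussianPDF 0 v₁ x * (∫⁻ y, s.indicator (fun _ => (1:ℝ≥0∞)) (x + y) *
          gaussianPDF 0 v₂ y) := by
        rw [hp1, lintegral_withDensity_eq_lintegral_mul _ hpdf1meas]
        · rfl
        · apply Measurable.lintegral_prod_right' (f := fun q : ℝ × ℝ =>
            s.indicator (fun _ => (1:ℝ≥0∞)) (q.1 + q.2) * gaussianPDF 0 v₂ q.2)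
          exact ((measurable_const.indicator hs).comp measurable_add).mul
            (hpdf2meas.comp measurable_snd)
    _ = ∫⁻ x, gaussianPDF 0 v₁ x * (∫⁻ z, s.indicator (fun _ => (1:ℝ≥0∞)) z *
          gaussianPDF 0 v₂ (z - x)) := by
        congr 1
        ext x
        congr 1
        have hshift := lintegral_add_left_eq_self (μ := (volume : Measure ℝ))
          (fun z => s.indicator (fun _ => (1:ℝ≥0∞)) z * gaussianPDF 0 v₂ (z - x)) x
        rw [← hshift]
        congr 1
        ext y
        simp only [add_sub_cancel_left]
    _ = ∫⁻ z, s.indicator (fun _ => (1:ℝ≥0∞)) z *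
          ∫⁻ x, gaussianPDF 0 v₁ x * gaussianPDF 0 v₂ (z - x) := by
        have hstep : ∀ x : ℝ, gaussianPDF 0 v₁ x * (∫⁻ z, s.indicator (fun _ => (1:ℝ≥0∞)) z *
              gaussianPDF 0 v₂ (z - x))
            = ∫⁻ z, gaussianPDF 0 v₁ x *
              (s.indicator (fun _ => (1:ℝ≥0∞)) z * gaussianPDF 0 v₂ (z - x)) := fun x => by
          have hm : Measurable fun z : ℝ =>
              s.indicator (fun _ => (1:ℝ≥0∞)) z * gaussianPDF 0 v₂ (z - x) :=
            (measurable_const.indicator hs).mul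
              (hpdf2meas.comp (measurable_id.sub measurable_const))
          rw [lintegral_const_mul _ hm]
        have hstep2 : ∀ z : ℝ, s.indicator (fun _ => (1:ℝ≥0∞)) z *
              ∫⁻ x, gaussianPDF 0 v₁ x * gaussianPDF 0 v₂ (z - x)
            = ∫⁻ x, gaussianPDF 0 v₁ x *
              (s.indicator (fun _ => (1:ℝ≥0∞)) z * gaussianPDF 0 v₂ (z - x)) := fun z => by
          have hm : Measurable fun x : ℝ =>
              gaussianPDF 0 v₁ x * gaussianPDF 0 v₂ (z - x) :=
            hpdf1meas.mul (hpdf2meas.comp (measurable_const.sub measurable_id))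
          rw [← lintegral_const_mul _ hm]
          congr 1; ext x; ring
        simp_rw [hstep, hstep2]
        rw [lintegral_lintegral_swap]
        apply Measurable.aemeasurable
        apply Measurable.mul
        · exact hpdf1meas.comp measurable_fst
        · apply Measurable.mul
          · exact (measurable_const.indicator hs).comp measurable_snd
          · exact hpdf2meas.comp (measurable_snd.sub measurable_fst)
    _ = ∫⁻ z, s.indicator (fun _ => (1:ℝ≥0∞)) z * gaussianPDF 0 (v₁ + v₂) z := by
        congr 1
        ext z
        congr 1
        have : ∀ (v : ℝ≥0) (y : ℝ), gaussianPDF 0 v y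
            = ENNReal.ofReal (gaussianPDFReal 0 v y) := fun v y => rfl
        simp only [this]
        exact lintegral_pdf_conv h₁ h₂ z
    _ = gaussianReal 0 (v₁ + v₂) s := by
        rw [gaussianReal_of_var_ne_zero _ (by simp [h₁, h₂]),
          withDensity_apply _ hs, ← lintegral_indicator hs]
        congr 1
        ext z
        by_cases hz : z ∈ s <;> simp [Set.indicator, hz]


section helpers
variable {Ω : Type*} [MeasureSpace Ω] [IsProbabilityMeasure (ℙ : Measure Ω)]

lemma integral_eq_of_law {X : Ω → ℝ} {v : ℝ≥0} (hX : Measurable X)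
    (hl : Measure.map X ℙ = gaussianReal 0 v) : ∫ ω, X ω ∂ℙ = 0 := by
  have h := integral_map (μ := (ℙ : Measure Ω)) hX.aemeasurable
    (f := fun x : ℝ => x) aestronglyMeasurable_id
  rw [← h, hl, _root_.integral_id_gaussianReal]

lemma integral_sq_of_law {X : Ω → ℝ} {v : ℝ≥0} (hX : Measurable X)
    (hl : Measure.map X ℙ = gaussianReal 0 v) : ∫ ω, X ω ^ 2 ∂ℙ = (v : ℝ) := by
  have h := integral_map (μ := (ℙ : Measure Ω)) hX.aemeasurable
    (f := fun x : ℝ => x ^ 2)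
    (by apply Measurable.aestronglyMeasurable; measurability)
  rw [← h, hl, integral_sq_gaussianReal]

lemma integrable_of_law {X : Ω → ℝ} {v : ℝ≥0} (hX : Measurable X)
    (hl : Measure.map X ℙ = gaussianReal 0 v) : Integrable X ℙ := by
  have h := (integrable_map_measure (μ := (ℙ : Measure Ω)) (f := X) (g := fun x : ℝ => x)
    aestronglyMeasurable_id hX.aemeasurable)
  rw [hl] at h
  exact h.mp (integrable_id_gaussianReal v)

lemma integrable_sq_of_law {X : Ω → ℝ} {v : ℝ≥0} (hX : Measurable X)
    (hl : Measure.map X ℙ = gaussianReal 0 v) : Integrable (fun ω => X ω ^ 2) ℙ := by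
  have h := (integrable_map_measure (μ := (ℙ : Measure Ω)) (f := X) (g := fun x : ℝ => x ^ 2)
    (by apply Measurable.aestronglyMeasurable; measurability) hX.aemeasurable)
  rw [hl] at h
  exact h.mp (integrable_sq_gaussianReal v)

lemma map_add_of_indep {X Y : Ω → ℝ} {v w : ℝ≥0} (hX : Measurable X) (hY : Measurable Y)
    (h : IndepFun X Y ℙ)
    (hXl : Measure.map X ℙ = gaussianReal 0 v) (hYl : Measure.map Y ℙ = gaussianReal 0 w) :
    Measure.map (fun ω => X ω + Y ω) ℙ = gaussianReal 0 (v + w) := by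
  have hprod := (indepFun_iff_map_prod_eq_prod_map_map hX.aemeasurable hY.aemeasurable).mp h
  have heq : (fun ω => X ω + Y ω) = (fun p : ℝ × ℝ => p.1 + p.2) ∘ fun ω => (X ω, Y ω) := rfl
  rw [heq, ← Measure.map_map measurable_add (hX.prodMk hY), hprod, hXl, hYl,
    gaussianReal_conv]

lemma map_const_mul_of_law {X : Ω → ℝ} {v : ℝ≥0} (hX : Measurable X)
    (hl : Measure.map X ℙ = gaussianReal 0 v) (a : ℝ) :
    Measure.map (fun ω => a * X ω) ℙ = gaussianReal 0 (⟨a ^ 2, sq_nonneg a⟩ * v) := by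
  have heq : (fun ω => a * X ω) = (fun x : ℝ => a * x) ∘ X := rfl
  rw [heq, ← Measure.map_map (measurable_const_mul a) hX, hl,
    gaussianReal_map_const_mul]
  norm_num
  rfl

end helpers

end Stmt9Aux

/-- covariance computation underlying Proposition 3. Let `λ, β > 0`
and let `g` be a discrete-time Wiener process with parameter `λ` on an index set
`T ⊆ [0, 1]` containing `0` and the points `e^{-βt}` for `t ∈ S ⊆ [0, ∞)`. Then
`f(t) = g(e^{-βt})`, `t ∈ S`, is a zero-mean Gaussian process with covariance function
`Cov(f(t), f(s)) = λ·min{e^{-βt}, e^{-βs}}` (the first-order stable spline kernel). -/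
theorem stmt9 {Ω : Type*} [MeasureSpace Ω] [IsProbabilityMeasure (ℙ : Measure Ω)]
    (lam β : ℝ) (hlam : 0 < lam) (hβ : 0 < β)
    (T S : Set ℝ) (hT : T ⊆ Set.Icc 0 1) (h0T : (0 : ℝ) ∈ T)
    (hS : S ⊆ Set.Ici 0) (hST : ∀ s ∈ S, Real.exp (-β * s) ∈ T)
    (g : ℝ → Ω → ℝ) (hgmeas : ∀ τ, Measurable (g τ))
    (hg0 : ∀ᵐ ω ∂ℙ, g 0 ω = 0)
    -- independent increments over `T`
    (hincr : ∀ (k : ℕ) (m : Fin (k + 1) → ℝ), StrictMono m → (∀ j, m j ∈ T) →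
      iIndepFun
        (fun j : Fin k => fun ω => g (m j.succ) ω - g (m j.castSucc) ω) ℙ)
    -- Gaussian increments: `g(τ_i) − g(τ_j) ~ N(0, λ(τ_i − τ_j))` for `τ_j < τ_i` in `T`
    (hgauss : ∀ τi ∈ T, ∀ τj ∈ T, τj < τi →
      Measure.map (fun ω => g τi ω - g τj ω) ℙ
        = gaussianReal 0 (Real.toNNReal (lam * (τi - τj))))
    (f : ℝ → Ω → ℝ) (hf : ∀ s ω, f s ω = g (Real.exp (-β * s)) ω) :
    -- `f` is zero mean on `S`
    (∀ s ∈ S, ∫ ω, f s ω ∂ℙ = 0) ∧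
    -- `f` is a Gaussian process: every finite linear combination of its values is Gaussian
    (∀ (k : ℕ) (m : Fin k → ℝ), (∀ j, m j ∈ S) → ∀ c : Fin k → ℝ, ∃ v : NNReal,
      Measure.map (fun ω => ∑ j : Fin k, c j * f (m j) ω) ℙ = gaussianReal 0 v) ∧
    -- the covariance function of `f` is the stable spline kernel
    (∀ s₁ ∈ S, ∀ s₂ ∈ S,
      ∫ ω, f s₁ ω * f s₂ ω ∂ℙ
        = lam * min (Real.exp (-β * s₁)) (Real.exp (-β * s₂))) := by
  classical
  -- the law of `g τ` for positive `τ ∈ T`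
  have hlaw : ∀ τ, τ ∈ T → 0 < τ →
      Measure.map (g τ) ℙ = gaussianReal 0 ((lam * τ).toNNReal) := by
    intro τ hτ hτpos
    have hae : (fun ω => g τ ω - g 0 ω) =ᵐ[ℙ] g τ := by
      filter_upwards [hg0] with ω h0
      rw [h0, sub_zero]
    rw [← Measure.map_congr hae]
    have := hgauss τ hτ 0 h0T hτpos
    rwa [sub_zero] at this
  refine ⟨?_, ?_, ?_⟩
  · -- zero mean
    intro s hs
    have hl := hlaw _ (hST s hs) (Real.exp_pos _)
    calc ∫ ω, f s ω ∂ℙ = ∫ ω, g (Real.exp (-β * s)) ω ∂ℙ := by simp_rw [hf]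
      _ = 0 := integral_eq_of_law (hgmeas _) hl
  · -- gaussian process
    intro k m hm c
    set τ : Fin k → ℝ := fun j => Real.exp (-β * m j) with hτdef
    have hτT : ∀ j, τ j ∈ T := fun j => hST _ (hm j)
    have hτpos : ∀ j, 0 < τ j := fun j => Real.exp_pos _
    set F : Finset ℝ := insert 0 (Finset.image τ Finset.univ) with hF
    have h0F : (0:ℝ) ∈ F := Finset.mem_insert_self _ _
    have hFne : F.Nonempty := ⟨0, h0F⟩
    set n : ℕ := F.card - 1 with hn
    have hcard : F.card = n + 1 := by
      have := Finset.card_pos.mpr hFne; omega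
    set u : Fin (n+1) → ℝ := fun i => ((F.orderIsoOfFin hcard) i : ℝ) with hu
    have humono : StrictMono u := fun i j hij =>
      Subtype.coe_lt_coe.mpr ((F.orderIsoOfFin hcard).strictMono hij)
    have huF : ∀ i, u i ∈ F := fun i => ((F.orderIsoOfFin hcard) i).2
    have huT : ∀ i, u i ∈ T := by
      intro i
      rcases Finset.mem_insert.mp (huF i) with h | h
      · rw [h]; exact h0T
      · obtain ⟨j, _, hj⟩ := Finset.mem_image.mp h
        rw [← hj]; exact hτT j
    have hu0 : u 0 = 0 := by
      have h1 : 0 ≤ u 0 := by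
        rcases Finset.mem_insert.mp (huF 0) with h | h
        · rw [h]
        · obtain ⟨j, _, hj⟩ := Finset.mem_image.mp h
          rw [← hj]; exact le_of_lt (hτpos j)
      have h2 : u 0 ≤ 0 := by
        obtain ⟨i, hi⟩ := (F.orderIsoOfFin hcard).surjective ⟨0, h0F⟩
        have h3 : u 0 ≤ u i := humono.monotone (Fin.zero_le i)
        rw [hu] at h3 ⊢
        simp only at h3 ⊢
        rw [hi] at h3
        exact h3
      linarith
    have hrr : ∀ j, ∃ rj : Fin (n+1), u rj = τ j := by
      intro j
      obtain ⟨i, hi⟩ := (F.orderIsoOfFin hcard).surjective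
        ⟨τ j, Finset.mem_insert_of_mem (Finset.mem_image_of_mem τ (Finset.mem_univ j))⟩
      exact ⟨i, congrArg Subtype.val hi⟩
    choose r hr using hrr
    -- increments
    set X : Fin n → Ω → ℝ := fun i ω => g (u i.succ) ω - g (u i.castSucc) ω with hX
    have hXmeas : ∀ i, Measurable (X i) := fun i => (hgmeas _).sub (hgmeas _)
    have hXindep : iIndepFun X ℙ := hincr n u humono huT
    set u' : ℕ → ℝ := fun i => u ⟨min i n, by omega⟩ with hu'
    set a : ℕ → ℝ := fun i => ∑ j : Fin k, if i < (r j : ℕ) then c j else 0 with ha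
    set Y : Fin n → Ω → ℝ := fun i ω => a (i : ℕ) * X i ω with hYdef
    have hYmeas : ∀ i, Measurable (Y i) := fun i => (hXmeas i).const_mul _
    have hYindep : iIndepFun Y ℙ :=
      hXindep.comp (fun i => fun x => a (i : ℕ) * x) (fun i => measurable_const_mul _)
    -- pointwise telescoping identity
    have hpt : ∀ ω, g 0 ω = 0 →
        ∑ j : Fin k, c j * g (τ j) ω = ∑ i : Fin n, Y i ω := by
      intro ω h0
      set G : ℕ → ℝ := fun i => g (u' i) ω with hG
      have hu'0 : u' 0 = 0 := by
        show u ⟨min 0 n, by omega⟩ = 0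
        have h00 : (⟨min 0 n, by omega⟩ : Fin (n+1)) = 0 := by
          apply Fin.ext; simp
        rw [h00, hu0]
      have hG0 : G 0 = 0 := by
        show g (u' 0) ω = 0
        rw [hu'0]
        exact h0
      have hstep1 : ∀ j : Fin k, g (τ j) ω
          = ∑ i ∈ Finset.range n, (if i < (r j : ℕ) then G (i+1) - G i else 0) := by
        intro j
        have hrle : (r j : ℕ) ≤ n := Nat.lt_succ_iff.mp (r j).isLt
        have h1 : g (τ j) ω = G (r j : ℕ) - G 0 := by
          symm
          have huj : u' (r j : ℕ) = τ j := by
            rw [← hr j]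
            show u ⟨min ((r j : ℕ)) n, by omega⟩ = u (r j)
            congr 1
            apply Fin.ext
            simp [min_eq_left hrle]
          show g (u' (r j : ℕ)) ω - G 0 = g (τ j) ω
          rw [huj, hG0, sub_zero]
        rw [h1, ← Finset.sum_range_sub G (r j : ℕ)]
        have hfil : Finset.range ((r j : ℕ))
            = (Finset.range n).filter (fun i => i < (r j : ℕ)) := by
          ext i
          simp only [Finset.mem_range, Finset.mem_filter]
          omega
        rw [hfil, Finset.sum_filter]
      calc ∑ j : Fin k, c j * g (τ j) ω
          = ∑ j : Fin k, ∑ i ∈ Finset.range n,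
              (if i < (r j : ℕ) then c j * (G (i+1) - G i) else 0) := by
            refine Finset.sum_congr rfl fun j _ => ?_
            rw [hstep1 j, Finset.mul_sum]
            refine Finset.sum_congr rfl fun i _ => ?_
            rw [mul_ite, mul_zero]
        _ = ∑ i ∈ Finset.range n, ∑ j : Fin k,
              (if i < (r j : ℕ) then c j * (G (i+1) - G i) else 0) := Finset.sum_comm
        _ = ∑ i ∈ Finset.range n, a i * (G (i+1) - G i) := by
            refine Finset.sum_congr rfl fun i _ => ?_
            rw [ha]
            rw [Finset.sum_mul]
            refine Finset.sum_congr rfl fun j _ => ?_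
            rw [ite_mul, zero_mul]
        _ = ∑ i : Fin n, a (i : ℕ) * (G ((i : ℕ)+1) - G (i : ℕ)) :=
            (Fin.sum_univ_eq_sum_range (fun i => a i * (G (i+1) - G i)) n).symm
        _ = ∑ i : Fin n, Y i ω := by
            refine Finset.sum_congr rfl fun i _ => ?_
            have h1 : u' ((i : ℕ)+1) = u i.succ := by
              show u ⟨min ((i : ℕ)+1) n, by omega⟩ = u i.succ
              congr 1
              apply Fin.ext
              simp [Nat.min_eq_left (Nat.succ_le_of_lt i.isLt)]
            have h2 : u' (i : ℕ) = u i.castSucc := by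
              show u ⟨min (i : ℕ) n, by omega⟩ = u i.castSucc
              congr 1
              apply Fin.ext
              simp [Nat.min_eq_left (le_of_lt i.isLt)]
            show a (i : ℕ) * (g (u' ((i:ℕ)+1)) ω - g (u' (i:ℕ)) ω) = Y i ω
            rw [h1, h2]
    -- law of partial sums
    have main : ∀ d : ℕ, d ≤ n → ∃ v : ℝ≥0,
        Measure.map (fun ω => ∑ i ∈ Finset.univ.filter (fun i : Fin n => (i:ℕ) < d), Y i ω) ℙ
          = gaussianReal 0 v := by
      intro d
      induction d with
      | zero =>
        intro _
        refine ⟨0, ?_⟩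
        have hemp : Finset.univ.filter (fun i : Fin n => (i:ℕ) < 0) = ∅ := by
          apply Finset.filter_false_of_mem
          intro i _
          omega
        simp only [hemp, Finset.sum_empty]
        rw [Measure.map_const, measure_univ, one_smul, gaussianReal_zero_var]
      | succ d ih =>
        intro hdn
        obtain ⟨v, hv⟩ := ih (by omega)
        have hd : d < n := by omega
        set i₀ : Fin n := ⟨d, hd⟩ with hi₀
        have hfil : Finset.univ.filter (fun i : Fin n => (i:ℕ) < d+1)
            = insert i₀ (Finset.univ.filter (fun i : Fin n => (i:ℕ) < d)) := by
          ext i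
          simp only [Finset.mem_filter, Finset.mem_univ, true_and, Finset.mem_insert]
          constructor
          · intro h
            rcases Nat.lt_succ_iff_lt_or_eq.mp h with h | h
            · exact Or.inr h
            · exact Or.inl (Fin.ext h)
          · rintro (h | h)
            · rw [h]; exact Nat.lt_succ_self d
            · omega
        have hnm : i₀ ∉ Finset.univ.filter (fun i : Fin n => (i:ℕ) < d) := by
          simp [hi₀]
        have hXl : Measure.map (X i₀) ℙ
            = gaussianReal 0 ((lam * (u i₀.succ - u i₀.castSucc)).toNNReal) :=
          hgauss _ (huT _) _ (huT _) (humono (Fin.castSucc_lt_succ : i₀.castSucc < i₀.succ))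
        have hYl := map_const_mul_of_law (hXmeas i₀) hXl (a (i₀ : ℕ))
        have hsum_meas : Measurable
            (fun ω => ∑ i ∈ Finset.univ.filter (fun i : Fin n => (i:ℕ) < d), Y i ω) :=
          Finset.measurable_sum _ (fun i _ => hYmeas i)
        have hfun : (∑ j ∈ Finset.univ.filter (fun i : Fin n => (i:ℕ) < d), Y j)
            = fun ω => ∑ j ∈ Finset.univ.filter (fun i : Fin n => (i:ℕ) < d), Y j ω := by
          funext ω
          exact Finset.sum_apply ω _ Y
        have hindep' :=
          hYindep.indepFun_finsetSum_of_notMem hYmeas hnm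
        rw [hfun] at hindep'
        have hmap := map_add_of_indep hsum_meas (hYmeas i₀) hindep' hv hYl
        refine ⟨v + ⟨a (i₀ : ℕ) ^ 2, sq_nonneg _⟩ *
          (lam * (u i₀.succ - u i₀.castSucc)).toNNReal, ?_⟩
        rw [hfil]
        have hsum : (fun ω => ∑ i ∈ insert i₀
              (Finset.univ.filter (fun i : Fin n => (i:ℕ) < d)), Y i ω)
            = fun ω => (∑ i ∈ Finset.univ.filter (fun i : Fin n => (i:ℕ) < d), Y i ω)
              + Y i₀ ω := by
          funext ω
          rw [Finset.sum_insert hnm]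
          ring
        rw [hsum]
        exact hmap
    obtain ⟨v, hv⟩ := main n le_rfl
    refine ⟨v, ?_⟩
    have hfiluniv : Finset.univ.filter (fun i : Fin n => (i:ℕ) < n) = Finset.univ := by
      apply Finset.filter_true_of_mem
      intro i _
      exact i.isLt
    rw [hfiluniv] at hv
    have hae : (fun ω => ∑ j : Fin k, c j * f (m j) ω)
        =ᵐ[ℙ] (fun ω => ∑ i : Fin n, Y i ω) := by
      filter_upwards [hg0] with ω h0
      simp_rw [hf]
      exact hpt ω h0
    rw [Measure.map_congr hae]
    exact hv
  · -- covariance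
    have key : ∀ τ₁, τ₁ ∈ T → ∀ τ₂, τ₂ ∈ T → 0 < τ₁ → τ₁ ≤ τ₂ →
        ∫ ω, g τ₁ ω * g τ₂ ω ∂ℙ = lam * τ₁ := by
      intro τ₁ h1 τ₂ h2 hpos hle
      have hXl := hlaw τ₁ h1 hpos
      have hlamτ : (((lam * τ₁).toNNReal : ℝ≥0) : ℝ) = lam * τ₁ :=
        Real.coe_toNNReal _ (by positivity)
      rcases eq_or_lt_of_le hle with heq | hlt
      · rw [← heq]
        calc ∫ ω, g τ₁ ω * g τ₁ ω ∂ℙ = ∫ ω, g τ₁ ω ^ 2 ∂ℙ := by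
              congr 1; ext ω; ring
          _ = lam * τ₁ := by rw [integral_sq_of_law (hgmeas τ₁) hXl, hlamτ]
      · set Y := fun ω => g τ₂ ω - g τ₁ ω with hYd
        have hYm : Measurable Y := (hgmeas _).sub (hgmeas _)
        have hYl : Measure.map Y ℙ = gaussianReal 0 ((lam * (τ₂ - τ₁)).toNNReal) :=
          hgauss τ₂ h2 τ₁ h1 hlt
        have hsm : StrictMono ![0, τ₁, τ₂] := by
          intro i j hij
          fin_cases i <;> fin_cases j <;>
            simp_all <;> first | linarith | omega
        have hmemT : ∀ j : Fin 3, ![0, τ₁, τ₂] j ∈ T := by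
          intro j
          fin_cases j
          · simpa using h0T
          · simpa using h1
          · simpa using h2
        have hii := hincr 2 ![0, τ₁, τ₂] hsm hmemT
        have hind01 := hii.indepFun (show (0 : Fin 2) ≠ 1 by decide)
        have hconv : IndepFun (fun ω => g τ₁ ω - g 0 ω) Y ℙ := by
          have e1 : (![0, τ₁, τ₂] (Fin.succ 0) : ℝ) = τ₁ := rfl
          have e2 : (![0, τ₁, τ₂] (Fin.castSucc 0) : ℝ) = 0 := rfl
          have e3 : (![0, τ₁, τ₂] (Fin.succ 1) : ℝ) = τ₂ := rfl
          have e4 : (![0, τ₁, τ₂] (Fin.castSucc 1) : ℝ) = τ₁ := rfl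
          simpa [e1, e2, e3, e4] using hind01
        have hae1 : (fun ω => g τ₁ ω - g 0 ω) =ᵐ[ℙ] g τ₁ := by
          filter_upwards [hg0] with ω h0
          rw [h0, sub_zero]
        have hIndep : IndepFun (g τ₁) Y ℙ := hconv.congr hae1 (EventuallyEq.refl _ _)
        have hint1 := integrable_of_law (hgmeas τ₁) hXl
        have hintY := integrable_of_law hYm hYl
        have hintsq := integrable_sq_of_law (hgmeas τ₁) hXl
        have hintmul : Integrable (fun ω => g τ₁ ω * Y ω) ℙ :=
          hIndep.integrable_mul hint1 hintY
        have hmul : ∫ ω, g τ₁ ω * Y ω ∂ℙ = (∫ ω, g τ₁ ω ∂ℙ) * ∫ ω, Y ω ∂ℙ :=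
          hIndep.integral_fun_mul_eq_mul_integral hint1.1 hintY.1
        calc ∫ ω, g τ₁ ω * g τ₂ ω ∂ℙ
            = ∫ ω, (g τ₁ ω * Y ω + g τ₁ ω ^ 2) ∂ℙ := by
              congr 1; ext ω; rw [hYd]; ring
          _ = (∫ ω, g τ₁ ω * Y ω ∂ℙ) + ∫ ω, g τ₁ ω ^ 2 ∂ℙ :=
              integral_add hintmul hintsq
          _ = lam * τ₁ := by
              rw [hmul, integral_eq_of_law (hgmeas τ₁) hXl,
                integral_eq_of_law hYm hYl, integral_sq_of_law (hgmeas τ₁) hXl, hlamτ]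
              ring
    intro s₁ hs₁ s₂ hs₂
    simp_rw [hf]
    rcases le_total (Real.exp (-β * s₁)) (Real.exp (-β * s₂)) with h | h
    · rw [min_eq_left h]
      exact key _ (hST _ hs₁) _ (hST _ hs₂) (Real.exp_pos _) h
    · rw [min_eq_right h]
      have hcomm : ∫ ω, g (Real.exp (-β * s₁)) ω * g (Real.exp (-β * s₂)) ω ∂ℙ
          = ∫ ω, g (Real.exp (-β * s₂)) ω * g (Real.exp (-β * s₁)) ω ∂ℙ := by
        congr 1; ext ω; ring
      rw [hcomm]
      exact key _ (hST _ hs₂) _ (hST _ hs₁) (Real.exp_pos _) h
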